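/- Let $G$ be a graph on $[n]$ with maximum degree $d$ and Cheeger constant $h(G) \ge \gamma d$ for some $\gamma > 0$. Let $U_1, U_2$ be disjoint vertex sets. Then there exist at least $\gamma d \cdot \frac{\min\{|U_1|,|U_2|\}}{2\ell(U_1,U_2)}$ pairwise edge-disjoint paths in $G$, each with one end in $U_1$ and the other in $U_2$, of length at most $\ell(U_1,U_2) := 2 + 2\log_{1+\gamma/2}\left(\frac{n}{\min\{|U_1|,|U_2|\} + \gamma d/2}\right)$. -/

import Mathlib

open Finset

/-- Edge boundary size `|∂_G U|`: the number of edges with exactly one end in `U`. -/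
def edgeBoundaryCard {n : ℕ} (G : SimpleGraph (Fin n)) [DecidableRel G.Adj]
    (U : Finset (Fin n)) : ℕ :=
  ((Finset.univ ×ˢ Finset.univ).filter
    fun p : Fin n × Fin n => G.Adj p.1 p.2 ∧ p.1 ∈ U ∧ p.2 ∉ U).card

/-- decidability of adjacency after deleting a finite edge set -/
noncomputable instance delDec {n : ℕ} (G : SimpleGraph (Fin n)) [DecidableRel G.Adj]
    (F : Finset (Sym2 (Fin n))) :
    DecidableRel (G.deleteEdges (↑F : Set (Sym2 (Fin n)))).Adj := by
  classical exact fun a b => inferInstance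

/-- counting lemma -/
lemma count_expand {n : ℕ} (G : SimpleGraph (Fin n)) [DecidableRel G.Adj]
    (F : Finset (Sym2 (Fin n))) (S : Finset (Fin n)) (w : ℕ)
    (hw : ∀ v : Fin n, v ∉ S → (S.filter (fun u => G.Adj u v ∧ s(u,v) ∉ F)).card ≤ w) :
    edgeBoundaryCard G S ≤
      (univ.filter fun v : Fin n => v ∉ S ∧ ∃ u ∈ S, G.Adj u v ∧ s(u,v) ∉ F).card * w
        + F.card := by
  classical
  set Bd := ((Finset.univ ×ˢ Finset.univ).filter
    fun p : Fin n × Fin n => G.Adj p.1 p.2 ∧ p.1 ∈ S ∧ p.2 ∉ S) with hBd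
  have hsplit : Bd.card =
      (Bd.filter (fun p => s(p.1, p.2) ∉ F)).card +
      (Bd.filter (fun p => ¬ s(p.1, p.2) ∉ F)).card :=
    (Finset.card_filter_add_card_filter_not _).symm
  have h1 : (Bd.filter (fun p => ¬ s(p.1, p.2) ∉ F)).card ≤ F.card := by
    apply Finset.card_le_card_of_injOn (fun p => s(p.1, p.2))
    · intro p hp
      simp only [Finset.mem_coe, Finset.mem_filter, not_not] at hp
      exact hp.2
    · intro p hp q hq hpq
      obtain ⟨-, hp1, hp2⟩ := (Finset.mem_filter.1 ((Finset.mem_filter.1 hp).1)).2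
      obtain ⟨-, hq1, hq2⟩ := (Finset.mem_filter.1 ((Finset.mem_filter.1 hq).1)).2
      rcases Sym2.eq_iff.1 hpq with ⟨h1, h2⟩ | ⟨h1, h2⟩
      · exact Prod.ext h1 h2
      · exact absurd (h1 ▸ hp1) hq2
  have h2 : (Bd.filter (fun p => s(p.1, p.2) ∉ F)).card ≤
      (univ.filter fun v : Fin n => v ∉ S ∧ ∃ u ∈ S, G.Adj u v ∧ s(u,v) ∉ F).card * w := by
    have hsub : Bd.filter (fun p => s(p.1, p.2) ∉ F) ⊆
        (univ.filter fun v : Fin n => v ∉ S ∧ ∃ u ∈ S, G.Adj u v ∧ s(u,v) ∉ F).biUnion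
          (fun v => (S.filter (fun u => G.Adj u v ∧ s(u,v) ∉ F)).image (fun u => (u, v))) := by
      intro p hp
      simp only [hBd, Finset.mem_filter, Finset.mem_product] at hp
      obtain ⟨⟨-, hadj, h1S, h2S⟩, hF⟩ := hp
      refine Finset.mem_biUnion.2 ⟨p.2, ?_, ?_⟩
      · exact Finset.mem_filter.2 ⟨Finset.mem_univ _, h2S, p.1, h1S, hadj, hF⟩
      · exact Finset.mem_image.2 ⟨p.1, Finset.mem_filter.2 ⟨h1S, hadj, hF⟩, rfl⟩
    calc (Bd.filter (fun p => s(p.1, p.2) ∉ F)).card ≤ _ := Finset.card_le_card hsub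
      _ ≤ ∑ v ∈ (univ.filter fun v : Fin n => v ∉ S ∧ ∃ u ∈ S, G.Adj u v ∧ s(u,v) ∉ F),
            ((S.filter (fun u => G.Adj u v ∧ s(u,v) ∉ F)).image (fun u => (u, v))).card :=
        Finset.card_biUnion_le
      _ ≤ ∑ v ∈ (univ.filter fun v : Fin n => v ∉ S ∧ ∃ u ∈ S, G.Adj u v ∧ s(u,v) ∉ F), w := by
        refine Finset.sum_le_sum fun v hv => ?_
        have hvS : v ∉ S := (Finset.mem_filter.1 hv).2.1
        exact (Finset.card_image_le).trans (hw v hvS)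
      _ = _ := by rw [Finset.sum_const, smul_eq_mul]
  have : edgeBoundaryCard G S = Bd.card := rfl
  omega

/-- the growing ball -/
def grow {n : ℕ} (H : SimpleGraph (Fin n)) [DecidableRel H.Adj]
    (U : Finset (Fin n)) : ℕ → Finset (Fin n)
  | 0 => U
  | (i+1) => grow H U i ∪
      univ.filter (fun v => v ∉ grow H U i ∧ ∃ u ∈ grow H U i, H.Adj u v)

lemma grow_subset {n : ℕ} (H : SimpleGraph (Fin n)) [DecidableRel H.Adj]
    (U : Finset (Fin n)) (i : ℕ) : grow H U i ⊆ grow H U (i+1) :=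
  subset_union_left

lemma grow_walk {n : ℕ} (H : SimpleGraph (Fin n)) [DecidableRel H.Adj]
    (U : Finset (Fin n)) (i : ℕ) :
    ∀ v ∈ grow H U i, ∃ u ∈ U, ∃ p : H.Walk u v, p.length ≤ i := by
  induction i with
  | zero => exact fun v hv => ⟨v, hv, SimpleGraph.Walk.nil, by simp⟩
  | succ i ih =>
    intro v hv
    rcases Finset.mem_union.1 hv with h | h
    · obtain ⟨u, hu, p, hp⟩ := ih v h
      exact ⟨u, hu, p, hp.trans (Nat.le_succ i)⟩
    · simp only [Finset.mem_filter] at h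
      obtain ⟨-, u', hu', hadj⟩ := h.2
      obtain ⟨u, hu, p, hp⟩ := ih u' hu'
      exact ⟨u, hu, p.concat hadj, by rw [SimpleGraph.Walk.length_concat]; omega⟩

set_option maxHeartbeats 3200000 in
/-- ball reaches more than half the vertices within the claimed radius -/
lemma reach {n : ℕ} (G : SimpleGraph (Fin n)) [DecidableRel G.Adj] (d : ℕ)
    (hd : G.maxDegree = d) (γ : ℝ) (hγ : 0 < γ) (hγ1 : γ ≤ 1) (hd1 : 1 ≤ d)
    (hdn : (d : ℝ) ≤ (n : ℝ) - 1)
    (hCheeger : ∀ U : Finset (Fin n), 1 ≤ U.card → (U.card : ℝ) ≤ n / 2 →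
      γ * d * U.card ≤ edgeBoundaryCard G U)
    (m : ℕ) (hm1 : 1 ≤ m) (hmn : (m : ℝ) ≤ n / 2)
    (F : Finset (Sym2 (Fin n))) (hF : (F.card : ℝ) < γ * d * m / 2)
    (U : Finset (Fin n)) (hmU : m ≤ U.card) :
    ∃ r : ℕ, (r : ℝ) ≤ 1 + Real.logb (1 + γ/2) ((n : ℝ) / (m + γ * d / 2)) ∧
      ∃ B : Finset (Fin n), (n : ℝ)/2 < B.card ∧
        ∀ v ∈ B, ∃ u ∈ U, ∃ p : (G.deleteEdges (↑F : Set (Sym2 (Fin n)))).Walk u v,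
          p.length ≤ r := by
  classical
  have hb1 : 1 < 1 + γ/2 := by linarith
  have hb2 : (1:ℝ) + γ/2 ≤ 2 := by linarith
  have hbpos : (0:ℝ) < 1 + γ/2 := by linarith
  set G' := G.deleteEdges (↑F : Set (Sym2 (Fin n))) with hG'
  haveI : DecidableRel G'.Adj := delDec G F
  obtain ⟨a, ha⟩ : ∃ a : ℕ → ℕ, ∀ i, a i = (grow G' U i).card :=
    ⟨fun i => (grow G' U i).card, fun i => rfl⟩
  have hnn : (2:ℝ) ≤ n := by
    have : (1:ℝ) ≤ m := by exact_mod_cast hm1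
    linarith
  have hdpos : (0:ℝ) < d := by exact_mod_cast hd1
  have hc : (0:ℝ) < (m:ℝ) + γ * d / 2 := by
    have : (1:ℝ) ≤ m := by exact_mod_cast hm1
    nlinarith
  have hcn : (m:ℝ) + γ * d / 2 ≤ n := by nlinarith
  have hlog0 : 0 ≤ Real.logb (1 + γ/2) ((n:ℝ) / (m + γ * d / 2)) := by
    apply Real.logb_nonneg hb1
    rw [le_div_iff₀ hc]; linarith
  have hma : ∀ i, m ≤ a i := by
    intro i; induction i with
    | zero => rw [ha]; exact hmU
    | succ i ih => rw [ha] at ih ⊢; exact le_trans ih (Finset.card_le_card (grow_subset G' U i))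
  have ha1 : ∀ i, 1 ≤ a i := fun i => le_trans hm1 (hma i)
  have hNcard : ∀ i, a (i+1) = a i +
      (univ.filter fun v : Fin n => v ∉ grow G' U i ∧
        ∃ u ∈ grow G' U i, G.Adj u v ∧ s(u,v) ∉ F).card := by
    intro i
    have hfe : (univ.filter fun v : Fin n => v ∉ grow G' U i ∧ ∃ u ∈ grow G' U i, G'.Adj u v)
        = (univ.filter fun v : Fin n => v ∉ grow G' U i ∧
            ∃ u ∈ grow G' U i, G.Adj u v ∧ s(u,v) ∉ F) := by
      apply Finset.filter_congr
      intro v _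
      simp [hG', SimpleGraph.deleteEdges_adj]
    have hdj : Disjoint (grow G' U i)
        (univ.filter fun v => v ∉ grow G' U i ∧ ∃ u ∈ grow G' U i, G'.Adj u v) := by
      rw [Finset.disjoint_left]
      intro x hx hx'
      exact (Finset.mem_filter.1 hx').2.1 hx
    rw [ha, ha, grow, Finset.card_union_of_disjoint hdj, hfe]
  have hkey : ∀ i (w : ℕ),
      (∀ v : Fin n, v ∉ grow G' U i →
        ((grow G' U i).filter (fun u => G.Adj u v ∧ s(u,v) ∉ F)).card ≤ w) →
      (a i : ℝ) ≤ n/2 →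
      γ * d * (a i) ≤ ((a (i+1) : ℝ) - a i) * w + F.card := by
    intro i w hw hhalf
    have h1 := hCheeger (grow G' U i) (by rw [← ha]; exact ha1 i) (by rw [← ha]; exact hhalf)
    rw [← ha] at h1
    have h2 := count_expand G F (grow G' U i) w hw
    have h3 := hNcard i
    have : ((a (i+1) : ℝ) - a i) =
        ((univ.filter fun v : Fin n => v ∉ grow G' U i ∧
          ∃ u ∈ grow G' U i, G.Adj u v ∧ s(u,v) ∉ F).card : ℝ) := by
      rw [h3]; push_cast; ring
    rw [this]
    calc γ * d * (a i) ≤ (edgeBoundaryCard G (grow G' U i) : ℝ) := h1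
      _ ≤ _ := by exact_mod_cast h2
  have keyA : ∀ i, (a i : ℝ) ≤ n/2 → (1 + γ/2) * a i ≤ a (i+1) := by
    intro i hhalf
    have hw : ∀ v : Fin n, v ∉ grow G' U i →
        ((grow G' U i).filter (fun u => G.Adj u v ∧ s(u,v) ∉ F)).card ≤ d := by
      intro v _
      have hsub : (grow G' U i).filter (fun u => G.Adj u v ∧ s(u,v) ∉ F) ⊆
          G.neighborFinset v := by
        intro u hu
        rw [SimpleGraph.mem_neighborFinset]
        exact ((Finset.mem_filter.1 hu).2.1).symm
      exact le_trans (Finset.card_le_card hsub) (hd ▸ G.degree_le_maxDegree v)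
    have h := hkey i d hw hhalf
    have hmi : (m:ℝ) ≤ a i := by exact_mod_cast hma i
    have hFi : (F.card : ℝ) < γ * d * (a i) / 2 := by
      have h' := mul_le_mul_of_nonneg_left hmi (le_of_lt (mul_pos hγ hdpos))
      calc (F.card : ℝ) < γ * d * m / 2 := hF
        _ ≤ γ * d * (a i) / 2 := by linarith
    have hmono : (a i : ℝ) ≤ a (i+1) := by
      have h'' := Finset.card_le_card (grow_subset G' U i)
      rw [← ha, ← ha] at h''
      exact_mod_cast h''
    nlinarith
  have keyB : (a 0 : ℝ) ≤ n/2 → (m:ℝ) + γ * d / 2 ≤ a 1 := by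
    intro hhalf
    have hw : ∀ v : Fin n, v ∉ grow G' U 0 →
        ((grow G' U 0).filter (fun u => G.Adj u v ∧ s(u,v) ∉ F)).card ≤ a 0 := by
      intro v _
      rw [ha]
      exact Finset.card_le_card (Finset.filter_subset _ _)
    have h := hkey 0 (a 0) hw hhalf
    have hm0 : (m:ℝ) ≤ a 0 := by exact_mod_cast hma 0
    have ha0 : (1:ℝ) ≤ a 0 := by exact_mod_cast ha1 0
    have hF0 : (F.card : ℝ) < γ * d * (a 0) / 2 := by
      have h' := mul_le_mul_of_nonneg_left hm0 (le_of_lt (mul_pos hγ hdpos))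
      calc (F.card : ℝ) < γ * d * m / 2 := hF
        _ ≤ γ * d * (a 0) / 2 := by linarith
    have ha0pos : (0:ℝ) < a 0 := by linarith
    norm_num at h
    have h1 : γ * d * (a 0) / 2 < ((a 1 : ℝ) - a 0) * a 0 := by linarith
    have h2 : γ * d / 2 < (a 1 : ℝ) - a 0 := by
      by_contra hcon2
      push_neg at hcon2
      nlinarith
    linarith
  have hex : ∃ i, (n:ℝ)/2 < a i := by
    by_contra hcon
    push_neg at hcon
    have hstep : ∀ i, a i + 1 ≤ a (i+1) := by
      intro i
      have h := keyA i (hcon i)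
      have h1 : (1:ℝ) ≤ a i := by exact_mod_cast ha1 i
      have h0 : (0:ℝ) < a i := by linarith
      have h2 := mul_pos (half_pos hγ) h0
      have h3 : (a i : ℝ) < a (i+1) := by linarith
      exact_mod_cast h3
    have hgrow2 : ∀ i, i + 1 ≤ a i := by
      intro i; induction i with
      | zero => exact ha1 0
      | succ i ih => exact le_trans (by omega) (hstep i)
    have h1 : a n ≤ n := by
      rw [ha]
      have := Finset.card_le_univ (grow G' U n)
      simpa using this
    have := hgrow2 n
    omega
  obtain ⟨r, hrspec, hrmin⟩ : ∃ r : ℕ, ((n:ℝ)/2 < a r) ∧ ∀ i, i < r → (a i : ℝ) ≤ n/2 :=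
    ⟨Nat.find hex, Nat.find_spec hex, fun i hi => not_lt.1 (Nat.find_min hex hi)⟩
  have hrle : (r:ℝ) ≤ 1 + Real.logb (1 + γ/2) ((n:ℝ) / (m + γ * d / 2)) := by
    rcases Nat.lt_or_ge r 2 with h2 | h2
    · have : (r:ℝ) ≤ 1 := by exact_mod_cast Nat.lt_succ_iff.1 h2
      linarith
    · obtain ⟨s, rfl⟩ : ∃ s, r = s + 2 := ⟨r - 2, by omega⟩
      have h0 : (a 0 : ℝ) ≤ n/2 := hrmin 0 (by omega)
      have h1 : (m:ℝ) + γ * d / 2 ≤ a 1 := keyB h0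
      have hpow : ∀ j, j + 1 ≤ s + 1 → (1 + γ/2)^j * ((m:ℝ) + γ * d / 2) ≤ a (j+1) := by
        intro j
        induction j with
        | zero => intro _; simpa using h1
        | succ j ih =>
          intro hj
          have hji := ih (by omega)
          have hA := keyA (j+1) (hrmin (j+1) (by omega))
          calc (1 + γ/2)^(j+1) * ((m:ℝ) + γ * d / 2)
              = (1 + γ/2) * ((1 + γ/2)^j * ((m:ℝ) + γ * d / 2)) := by ring
            _ ≤ (1 + γ/2) * a (j+1) := by nlinarith
            _ ≤ a (j+2) := hA
      have hs : (1 + γ/2)^s * ((m:ℝ) + γ * d / 2) ≤ (n:ℝ)/2 :=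
        le_trans (hpow s le_rfl) (hrmin (s+1) (by omega))
      have hpow_le : (1 + γ/2)^s ≤ (n:ℝ) / (2 * ((m:ℝ) + γ * d / 2)) := by
        rw [le_div_iff₀ (by positivity)]
        nlinarith
      have hlogs : (s:ℝ) ≤ Real.logb (1 + γ/2) ((n:ℝ) / (2 * ((m:ℝ) + γ * d / 2))) := by
        have hxpos : (0:ℝ) < (n:ℝ) / (2 * ((m:ℝ) + γ * d / 2)) := by positivity
        rw [Real.le_logb_iff_rpow_le hb1 hxpos]
        rw [Real.rpow_natCast]
        exact hpow_le
      have hdiv : (n:ℝ) / (2 * ((m:ℝ) + γ * d / 2)) = ((n:ℝ) / (m + γ * d / 2)) / 2 := by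
        field_simp
      have hlog2 : (1:ℝ) ≤ Real.logb (1 + γ/2) 2 := by
        rw [Real.le_logb_iff_rpow_le hb1 (by norm_num : (0:ℝ) < 2)]
        rw [Real.rpow_one]
        exact hb2
      have hsplit : Real.logb (1 + γ/2) (((n:ℝ) / (m + γ * d / 2)) / 2)
          = Real.logb (1 + γ/2) ((n:ℝ) / (m + γ * d / 2)) - Real.logb (1 + γ/2) 2 := by
        apply Real.logb_div
        · positivity
        · norm_num
      push_cast
      rw [hdiv, hsplit] at hlogs
      linarith
  refine ⟨r, hrle, grow G' U r, ?_, grow_walk G' U r⟩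
  rw [← ha]
  exact hrspec

/-- one short path avoiding a small forbidden edge set -/
lemma exists_short_path {n : ℕ} (G : SimpleGraph (Fin n)) [DecidableRel G.Adj] (d : ℕ)
    (hd : G.maxDegree = d) (γ : ℝ) (hγ : 0 < γ) (hγ1 : γ ≤ 1) (hd1 : 1 ≤ d)
    (hdn : (d : ℝ) ≤ (n : ℝ) - 1)
    (hCheeger : ∀ U : Finset (Fin n), 1 ≤ U.card → (U.card : ℝ) ≤ n / 2 →
      γ * d * U.card ≤ edgeBoundaryCard G U)
    (U₁ U₂ : Finset (Fin n)) (hdisj : Disjoint U₁ U₂)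
    (hne₁ : U₁.Nonempty) (hne₂ : U₂.Nonempty)
    (F : Finset (Sym2 (Fin n)))
    (hF : (F.card : ℝ) < γ * d * (min U₁.card U₂.card) / 2) :
    ∃ (u v : Fin n) (p : G.Walk u v), u ∈ U₁ ∧ v ∈ U₂ ∧ p.IsPath ∧
      ((p.length : ℝ) ≤ 2 + 2 * Real.logb (1 + γ / 2)
        ((n : ℝ) / ((min U₁.card U₂.card : ℕ) + γ * d / 2))) ∧
      ∀ e ∈ p.edges, e ∉ F := by
  classical
  set m := min U₁.card U₂.card with hm
  have hm1 : 1 ≤ m := le_min (Finset.card_pos.2 hne₁) (Finset.card_pos.2 hne₂)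
  have hmn : (m : ℝ) ≤ n / 2 := by
    have h1 : U₁.card + U₂.card ≤ n := by
      have := Finset.card_le_univ (U₁ ∪ U₂)
      rw [Finset.card_union_of_disjoint hdisj] at this
      simpa using this
    have h2 : 2 * m ≤ U₁.card + U₂.card := by
      have := min_le_left U₁.card U₂.card
      have := min_le_right U₁.card U₂.card
      omega
    have h3 : 2 * m ≤ n := le_trans h2 h1
    have h4 : (2 * m : ℝ) ≤ n := by exact_mod_cast h3
    linarith
  obtain ⟨r₁, hr₁, B₁, hB₁, hw₁⟩ := reach G d hd γ hγ hγ1 hd1 hdn hCheeger m hm1 hmn F hF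
    U₁ (min_le_left _ _)
  obtain ⟨r₂, hr₂, B₂, hB₂, hw₂⟩ := reach G d hd γ hγ hγ1 hd1 hdn hCheeger m hm1 hmn F hF
    U₂ (min_le_right _ _)
  have hinter : (B₁ ∩ B₂).Nonempty := by
    rw [← Finset.card_pos]
    by_contra hc
    push_neg at hc
    have h3 := Finset.card_union_add_card_inter B₁ B₂
    have h4 : (B₁ ∪ B₂).card ≤ n := by
      have := Finset.card_le_univ (B₁ ∪ B₂)
      simpa using this
    have h5 : B₁.card + B₂.card ≤ n := by omega
    have h6 : (B₁.card : ℝ) + B₂.card ≤ n := by exact_mod_cast h5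
    linarith
  obtain ⟨x, hx⟩ := hinter
  obtain ⟨u, hu, p₁, hp₁⟩ := hw₁ x (Finset.mem_of_mem_inter_left hx)
  obtain ⟨v, hv, p₂, hp₂⟩ := hw₂ x (Finset.mem_of_mem_inter_right hx)
  set q := p₁.append p₂.reverse with hq
  have hql : q.length ≤ r₁ + r₂ := by
    rw [hq, SimpleGraph.Walk.length_append, SimpleGraph.Walk.length_reverse]
    omega
  have hbl : q.bypass.length ≤ r₁ + r₂ := le_trans (SimpleGraph.Walk.length_bypass_le q) hql
  have hedge : ∀ e ∈ q.bypass.edges, e ∈ G.edgeSet := by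
    intro e he
    have h1 := SimpleGraph.Walk.edges_subset_edgeSet q.bypass he
    exact SimpleGraph.edgeSet_mono (SimpleGraph.deleteEdges_le _) h1
  refine ⟨u, v, q.bypass.transfer G hedge, hu, hv,
    (SimpleGraph.Walk.bypass_isPath q).transfer hedge, ?_, ?_⟩
  · rw [SimpleGraph.Walk.length_transfer]
    have h7 : ((q.bypass.length : ℕ) : ℝ) ≤ (r₁ : ℝ) + r₂ := by exact_mod_cast hbl
    calc ((q.bypass.length : ℕ) : ℝ) ≤ (r₁ : ℝ) + r₂ := h7
      _ ≤ 2 + 2 * Real.logb (1 + γ / 2) ((n : ℝ) / (m + γ * d / 2)) := by linarith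
      _ = 2 + 2 * Real.logb (1 + γ / 2) ((n : ℝ) / ((m : ℕ) + γ * d / 2)) := by norm_num
  · intro e he
    rw [SimpleGraph.Walk.edges_transfer] at he
    have h1 := SimpleGraph.Walk.edges_subset_edgeSet q.bypass he
    rw [SimpleGraph.edgeSet_deleteEdges] at h1
    intro heF
    exact h1.2 heF

lemma edgeBoundaryCard_singleton_le {n : ℕ} (G : SimpleGraph (Fin n)) [DecidableRel G.Adj]
    (u : Fin n) : edgeBoundaryCard G ({u} : Finset (Fin n)) ≤ G.degree u := by
  rw [← SimpleGraph.card_neighborFinset_eq_degree]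
  apply Finset.card_le_card_of_injOn (fun p => p.2)
  · intro p hp
    simp only [Finset.mem_coe, Finset.mem_filter, Finset.mem_product, Finset.mem_singleton] at hp
    obtain ⟨-, hadj, h1, -⟩ := hp
    rw [Finset.mem_coe, SimpleGraph.mem_neighborFinset]
    exact h1 ▸ hadj
  · intro p hp q hq hpq
    simp only [Finset.mem_coe, Finset.mem_filter, Finset.mem_product,
      Finset.mem_singleton] at hp hq
    exact Prod.ext (hp.2.2.1.trans hq.2.2.1.symm) hpq

set_option maxHeartbeats 1600000 in
/-- If `h(G) ≥ γ d`, then between any two disjoint vertex sets `U₁, U₂` there are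
at least `γ d min(|U₁|,|U₂|)/(2ℓ)` pairwise edge-disjoint paths of length at most
`ℓ = 2 + 2 log_{1+γ/2}(n/(min(|U₁|,|U₂|) + γ d / 2))`. -/
theorem edge_disjoint_paths_of_cheeger {n : ℕ} (G : SimpleGraph (Fin n))
    [DecidableRel G.Adj] (d : ℕ) (hd : G.maxDegree = d) (γ : ℝ) (hγ : 0 < γ)
    (hCheeger : ∀ U : Finset (Fin n), 1 ≤ U.card → (U.card : ℝ) ≤ n / 2 →
      γ * d * U.card ≤ edgeBoundaryCard G U)
    (U₁ U₂ : Finset (Fin n)) (hdisj : Disjoint U₁ U₂)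
    (hne₁ : U₁.Nonempty) (hne₂ : U₂.Nonempty) :
    ∃ (k : ℕ) (P : Fin k → Σ (u : Fin n) (v : Fin n), G.Walk u v),
      (γ * d * (min U₁.card U₂.card : ℕ) /
          (2 * (2 + 2 * Real.logb (1 + γ / 2)
            ((n : ℝ) / ((min U₁.card U₂.card : ℕ) + γ * d / 2)))) ≤ k)
      ∧ (∀ i, (P i).1 ∈ U₁ ∧ (P i).2.1 ∈ U₂ ∧ (P i).2.2.IsPath
          ∧ ((P i).2.2.length : ℝ)
              ≤ 2 + 2 * Real.logb (1 + γ / 2)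
                  ((n : ℝ) / ((min U₁.card U₂.card : ℕ) + γ * d / 2)))
      ∧ (∀ i j, i ≠ j → List.Disjoint (P i).2.2.edges (P j).2.2.edges) := by
  classical
  set m := min U₁.card U₂.card with hm
  -- basic facts
  obtain ⟨u₀, hu₀⟩ := hne₁
  obtain ⟨v₀, hv₀⟩ := hne₂
  have huv : u₀ ≠ v₀ := fun h => (Finset.disjoint_left.1 hdisj hu₀) (h ▸ hv₀)
  have hn2 : 2 ≤ n := by
    have h1 : 1 < Fintype.card (Fin n) := Fintype.one_lt_card_iff_nontrivial.2 ⟨u₀, v₀, huv⟩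
    simp at h1; omega
  have hnn : (2:ℝ) ≤ n := by exact_mod_cast hn2
  rcases Nat.eq_zero_or_pos d with hd0 | hd1
  · refine ⟨0, Fin.elim0, ?_, fun i => i.elim0, fun i => i.elim0⟩
    simp [hd0]
  -- d ≥ 1
  have hdpos : (0:ℝ) < d := by exact_mod_cast hd1
  have hγ1 : γ ≤ 1 := by
    have h1 := hCheeger {u₀} (by simp) (by simp; linarith)
    have h2 : edgeBoundaryCard G {u₀} ≤ d :=
      le_trans (edgeBoundaryCard_singleton_le G u₀) (hd ▸ G.degree_le_maxDegree u₀)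
    have h3 : (edgeBoundaryCard G {u₀} : ℝ) ≤ d := by exact_mod_cast h2
    simp only [Finset.card_singleton, Nat.cast_one, mul_one] at h1
    nlinarith
  have hdn : (d : ℝ) ≤ (n : ℝ) - 1 := by
    have h1 : G.maxDegree < Fintype.card (Fin n) := by
      haveI : Nonempty (Fin n) := ⟨u₀⟩
      exact G.maxDegree_lt_card_verts
    rw [hd] at h1
    simp only [Fintype.card_fin] at h1
    have h2 : d + 1 ≤ n := h1
    have h3 : (d:ℝ) + 1 ≤ n := by exact_mod_cast h2
    linarith
  have hm1 : 1 ≤ m := le_min (Finset.card_pos.2 ⟨u₀, hu₀⟩) (Finset.card_pos.2 ⟨v₀, hv₀⟩)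
  have hmpos : (0:ℝ) < m := by exact_mod_cast hm1
  have hc : (0:ℝ) < (m:ℝ) + γ * d / 2 := by nlinarith
  have hmn : (m : ℝ) ≤ n / 2 := by
    have h1 : U₁.card + U₂.card ≤ n := by
      have := Finset.card_le_univ (U₁ ∪ U₂)
      rw [Finset.card_union_of_disjoint hdisj] at this
      simpa using this
    have h2 : 2 * m ≤ U₁.card + U₂.card := by
      have := min_le_left U₁.card U₂.card
      have := min_le_right U₁.card U₂.card
      omega
    have h4 : (2 * m : ℝ) ≤ n := by exact_mod_cast le_trans h2 h1
    linarith
  have hcn : (m:ℝ) + γ * d / 2 ≤ n := by nlinarith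
  set L : ℝ := 2 + 2 * Real.logb (1 + γ / 2) ((n : ℝ) / ((m : ℕ) + γ * d / 2)) with hL
  have hb1 : 1 < 1 + γ/2 := by linarith
  have hlog0 : 0 ≤ Real.logb (1 + γ/2) ((n:ℝ) / (m + γ * d / 2)) := by
    apply Real.logb_nonneg hb1
    rw [le_div_iff₀ hc]
    linarith
  have hL2 : (2:ℝ) ≤ L := by rw [hL]; push_cast; linarith
  have hLpos : (0:ℝ) < L := by linarith
  set k := ⌈γ * d * m / (2 * L)⌉₊ with hk
  have main : ∀ j : ℕ, j ≤ k → ∃ P : Fin j → Σ (u : Fin n) (v : Fin n), G.Walk u v,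
      (∀ i, (P i).1 ∈ U₁ ∧ (P i).2.1 ∈ U₂ ∧ (P i).2.2.IsPath ∧ ((P i).2.2.length : ℝ) ≤ L) ∧
      (∀ i j', i ≠ j' → List.Disjoint (P i).2.2.edges (P j').2.2.edges) := by
    intro j
    induction j with
    | zero => exact fun _ => ⟨Fin.elim0, fun i => i.elim0, fun i => i.elim0⟩
    | succ j ih =>
      intro hj
      obtain ⟨P, hP, hPd⟩ := ih (le_trans (Nat.le_succ j) hj)
      set F : Finset (Sym2 (Fin n)) :=
        Finset.univ.biUnion (fun i : Fin j => (P i).2.2.edges.toFinset) with hFdef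
      have hFcard : (F.card : ℝ) < γ * d * m / 2 := by
        have h1 : F.card ≤ ∑ i : Fin j, (P i).2.2.edges.toFinset.card :=
          Finset.card_biUnion_le
        have h2 : ∀ i : Fin j, ((P i).2.2.edges.toFinset.card : ℝ) ≤ L := by
          intro i
          have ha := (P i).2.2.edges.toFinset_card_le
          have hb : (P i).2.2.edges.length = (P i).2.2.length :=
            SimpleGraph.Walk.length_edges _
          have hc2 : ((P i).2.2.edges.toFinset.card : ℝ) ≤ ((P i).2.2.length : ℝ) := by
            exact_mod_cast hb ▸ ha
          exact le_trans hc2 (hP i).2.2.2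
        have h3 : (F.card : ℝ) ≤ (j : ℝ) * L := by
          calc (F.card : ℝ) ≤ ∑ i : Fin j, ((P i).2.2.edges.toFinset.card : ℝ) := by
                exact_mod_cast h1
            _ ≤ ∑ _i : Fin j, L := Finset.sum_le_sum (fun i _ => h2 i)
            _ = (j : ℝ) * L := by simp [mul_comm]
        have h4 : (j : ℝ) < γ * d * m / (2 * L) := by
          rw [← Nat.lt_ceil]
          omega
        have h5 : (j : ℝ) * L < γ * d * m / 2 := by
          have h6 := mul_lt_mul_of_pos_right h4 hLpos
          have h7 : γ * d * m / (2 * L) * L = γ * d * m / 2 := by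
            field_simp
          rw [h7] at h6
          exact h6
        exact lt_of_le_of_lt h3 h5
      obtain ⟨u, v, p, hu, hv, hpath, hlen, hnotF⟩ :=
        exists_short_path G d hd γ hγ hγ1 hd1 hdn hCheeger U₁ U₂ hdisj
          ⟨u₀, hu₀⟩ ⟨v₀, hv₀⟩ F hFcard
      have hnew : ∀ i₀ : Fin j, List.Disjoint (P i₀).2.2.edges p.edges := by
        intro i₀ e he he'
        exact hnotF e he' (Finset.mem_biUnion.2 ⟨i₀, Finset.mem_univ _,
          List.mem_toFinset.2 he⟩)
      refine ⟨Fin.snoc P ⟨u, v, p⟩, ?_, ?_⟩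
      · intro i
        rcases Fin.eq_castSucc_or_eq_last i with ⟨i', rfl⟩ | rfl
        · rw [Fin.snoc_castSucc]
          exact hP i'
        · rw [Fin.snoc_last]
          exact ⟨hu, hv, hpath, hlen⟩
      · intro i i' hne
        rcases Fin.eq_castSucc_or_eq_last i with ⟨i₀, rfl⟩ | rfl <;>
          rcases Fin.eq_castSucc_or_eq_last i' with ⟨i₁, rfl⟩ | rfl
        · rw [Fin.snoc_castSucc, Fin.snoc_castSucc]
          exact hPd i₀ i₁ (fun h => hne (by rw [h]))
        · rw [Fin.snoc_castSucc, Fin.snoc_last]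
          exact hnew i₀
        · rw [Fin.snoc_last, Fin.snoc_castSucc]
          exact (hnew i₁).symm
        · exact absurd rfl hne
  obtain ⟨P, h1, h2⟩ := main k le_rfl
  refine ⟨k, P, ?_, fun i => ⟨(h1 i).1, (h1 i).2.1, (h1 i).2.2.1, (h1 i).2.2.2⟩, h2⟩
  exact Nat.le_ceil _
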